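/- arXiv:0707.1838 — 2 statements merged into one kernel-verified Lean document; each statement's English description precedes it below -/
import Mathlib

section
/- Let B be an m-by-m real upper bidiagonal matrix all of whose diagonal entries B(i,i) and superdiagonal entries B(i,i+1) are nonzero, and let σ ≥ 0 be such that σ² is not an eigenvalue of BᵀB (equivalently, σ is not a singular value of B). Let S and T be m-by-m real orthogonal upper Hessenberg matrices with all subdiagonal entries positive, and let L and R be upper triangular matrices, such that BBᵀ − σ²I = S·L and BᵀB − σ²I = T·R. Then B̄ := Sᵀ B T is upper bidiagonal. -/
open Matrix

/-- Product of an upper triangular matrix and an upper Hessenberg matrix is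
upper Hessenberg. -/
lemma hess_aux1 {m : ℕ} (U H : Matrix (Fin m) (Fin m) ℝ)
    (hU : ∀ i j : Fin m, j.val < i.val → U i j = 0)
    (hH : ∀ i j : Fin m, j.val + 1 < i.val → H i j = 0) :
    ∀ i j : Fin m, j.val + 1 < i.val → (U * H) i j = 0 := by
  intro i j hij
  rw [Matrix.mul_apply]
  apply Finset.sum_eq_zero
  intro k _
  rcases lt_or_ge k.val i.val with h | h
  · rw [hU i k h, zero_mul]
  · rw [hH k j (lt_of_lt_of_le hij h), mul_zero]

/-- Product of an upper Hessenberg matrix and an upper triangular matrix is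
upper Hessenberg. -/
lemma hess_aux2 {m : ℕ} (H U : Matrix (Fin m) (Fin m) ℝ)
    (hH : ∀ i j : Fin m, j.val + 1 < i.val → H i j = 0)
    (hU : ∀ i j : Fin m, j.val < i.val → U i j = 0) :
    ∀ i j : Fin m, j.val + 1 < i.val → (H * U) i j = 0 := by
  intro i j hij
  rw [Matrix.mul_apply]
  apply Finset.sum_eq_zero
  intro k _
  rcases lt_or_ge j.val k.val with h | h
  · rw [hU k j h, mul_zero]
  · rw [hH i k (lt_of_le_of_lt (by omega) hij), zero_mul]

/-- The SVD step of Golub and Kahan preserves upper bidiagonal structure: if `B`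
is upper bidiagonal with nonzero diagonal and superdiagonal, `σ ≥ 0` with `σ²`
not an eigenvalue of `BᵀB`, and `BBᵀ − σ²I = S·L`, `BᵀB − σ²I = T·R` with `S, T`
orthogonal upper Hessenberg with positive subdiagonals and `L, R` upper
triangular, then `B̄ := SᵀBT` is upper bidiagonal. -/
theorem svd_step_preserves_bidiagonal (m : ℕ) (B L R S T : Matrix (Fin m) (Fin m) ℝ)
    (σ : ℝ) (hσ : 0 ≤ σ)
    (hbd : ∀ i j : Fin m, ¬(j.val = i.val ∨ j.val = i.val + 1) → B i j = 0)
    (hdiag : ∀ i : Fin m, B i i ≠ 0)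
    (hsuper : ∀ i j : Fin m, j.val = i.val + 1 → B i j ≠ 0)
    (hnoteig : ∀ v : Fin m → ℝ, (Bᵀ * B).mulVec v = σ ^ 2 • v → v = 0)
    (hS : S ∈ Matrix.orthogonalGroup (Fin m) ℝ)
    (hShess : ∀ i j : Fin m, j.val + 1 < i.val → S i j = 0)
    (hSsub : ∀ i j : Fin m, i.val = j.val + 1 → 0 < S i j)
    (hT : T ∈ Matrix.orthogonalGroup (Fin m) ℝ)
    (hThess : ∀ i j : Fin m, j.val + 1 < i.val → T i j = 0)
    (hTsub : ∀ i j : Fin m, i.val = j.val + 1 → 0 < T i j)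
    (hL : ∀ i j : Fin m, j.val < i.val → L i j = 0)
    (hR : ∀ i j : Fin m, j.val < i.val → R i j = 0)
    (hleft : B * Bᵀ - σ ^ 2 • (1 : Matrix (Fin m) (Fin m) ℝ) = S * L)
    (hright : Bᵀ * B - σ ^ 2 • (1 : Matrix (Fin m) (Fin m) ℝ) = T * R) :
    ∀ i j : Fin m, ¬(j.val = i.val ∨ j.val = i.val + 1) → (Sᵀ * B * T) i j = 0 := by
  -- B is upper triangular
  have hBtri : B.BlockTriangular id := by
    intro i j hij
    exact hbd i j (by simp only [id] at hij; omega)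
  -- B invertible
  have hdetB : B.det ≠ 0 := by
    rw [Matrix.det_of_upperTriangular hBtri]
    exact Finset.prod_ne_zero_iff.mpr fun i _ => hdiag i
  have hBinv : B * B⁻¹ = 1 := Matrix.mul_nonsing_inv B (isUnit_iff_ne_zero.mpr hdetB)
  -- A := BᵀB − σ²I is invertible
  have hdetA : (Bᵀ * B - σ ^ 2 • (1 : Matrix (Fin m) (Fin m) ℝ)).det ≠ 0 := by
    intro h
    obtain ⟨v, hv, hv0⟩ := (Matrix.exists_mulVec_eq_zero_iff).mpr h
    apply hv
    apply hnoteig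
    have := sub_eq_zero.mpr (rfl : (Bᵀ * B).mulVec v = (Bᵀ * B).mulVec v)
    rw [Matrix.sub_mulVec, Matrix.smul_mulVec, Matrix.one_mulVec, sub_eq_zero] at hv0
    exact hv0
  -- orthogonality
  have hSS : Sᵀ * S = 1 := by
    have := hS.1
    simpa [Matrix.star_eq_conjTranspose, Matrix.conjTranspose_eq_transpose_of_trivial] using this
  have hTT : Tᵀ * T = 1 := by
    have := hT.1
    simpa [Matrix.star_eq_conjTranspose, Matrix.conjTranspose_eq_transpose_of_trivial] using this
  have hdetS : S.det ≠ 0 := by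
    intro h
    have : (Sᵀ * S).det = 0 := by rw [Matrix.det_mul, h, mul_zero]
    rw [hSS, Matrix.det_one] at this; exact one_ne_zero this
  have hdetT : T.det ≠ 0 := by
    intro h
    have : (Tᵀ * T).det = 0 := by rw [Matrix.det_mul, h, mul_zero]
    rw [hTT, Matrix.det_one] at this; exact one_ne_zero this
  -- R invertible
  have hdetR : R.det ≠ 0 := by
    intro h
    apply hdetA
    rw [hright, Matrix.det_mul, h, mul_zero]
  -- BBᵀ − σ²I = B(BᵀB − σ²I)B⁻¹
  have hconj : B * Bᵀ - σ ^ 2 • (1 : Matrix (Fin m) (Fin m) ℝ) =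
      B * (Bᵀ * B - σ ^ 2 • (1 : Matrix (Fin m) (Fin m) ℝ)) * B⁻¹ := by
    rw [Matrix.mul_sub, Matrix.sub_mul, Matrix.mul_smul, Matrix.mul_one,
      Matrix.smul_mul, hBinv, ← Matrix.mul_assoc, Matrix.mul_assoc (B * Bᵀ), hBinv,
      Matrix.mul_one]
  have hdetL : L.det ≠ 0 := by
    intro h
    have : (S * L).det = 0 := by rw [Matrix.det_mul, h, mul_zero]
    rw [← hleft, hconj] at this
    rw [Matrix.det_mul, Matrix.det_mul] at this
    rcases mul_eq_zero.mp this with h' | h'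
    · rcases mul_eq_zero.mp h' with h'' | h''
      · exact hdetB h''
      · exact hdetA h''
    · exact hdetB (by
        have := Matrix.det_nonsing_inv (A := B) ▸ h'
        rwa [Matrix.det_nonsing_inv, Ring.inverse_eq_inv', inv_eq_zero] at h')
  have hRinv : R * R⁻¹ = 1 := Matrix.mul_nonsing_inv R (isUnit_iff_ne_zero.mpr hdetR)
  have hLinv : L * L⁻¹ = 1 := Matrix.mul_nonsing_inv L (isUnit_iff_ne_zero.mpr hdetL)
  -- key commutation identity: B(TR) = (SL)B
  have hkey : B * (T * R) = (S * L) * B := by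
    rw [← hright, ← hleft]
    rw [Matrix.mul_sub, Matrix.sub_mul, Matrix.mul_smul, Matrix.mul_one,
      Matrix.smul_mul, Matrix.one_mul, ← Matrix.mul_assoc]
  -- and Bᵀ(SL) = (TR)Bᵀ
  have hkey2 : Bᵀ * (S * L) = (T * R) * Bᵀ := by
    rw [← hright, ← hleft]
    rw [Matrix.mul_sub, Matrix.sub_mul, Matrix.mul_smul, Matrix.mul_one,
      Matrix.smul_mul, Matrix.one_mul, ← Matrix.mul_assoc]
  -- SᵀBT = L B R⁻¹
  have hmain : Sᵀ * B * T = L * B * R⁻¹ := by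
    have h1 : Sᵀ * (B * (T * R)) * R⁻¹ = Sᵀ * ((S * L) * B) * R⁻¹ := by rw [hkey]
    calc Sᵀ * B * T = Sᵀ * B * T * (R * R⁻¹) := by rw [hRinv, Matrix.mul_one]
      _ = Sᵀ * (B * (T * R)) * R⁻¹ := by simp only [Matrix.mul_assoc]
      _ = Sᵀ * ((S * L) * B) * R⁻¹ := h1
      _ = (Sᵀ * S) * (L * B) * R⁻¹ := by simp only [Matrix.mul_assoc]
      _ = L * B * R⁻¹ := by rw [hSS, Matrix.one_mul]
  -- TᵀBᵀS = R Bᵀ L⁻¹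
  have hmain2 : Tᵀ * Bᵀ * S = R * Bᵀ * L⁻¹ := by
    have h1 : Tᵀ * (Bᵀ * (S * L)) * L⁻¹ = Tᵀ * ((T * R) * Bᵀ) * L⁻¹ := by rw [hkey2]
    calc Tᵀ * Bᵀ * S = Tᵀ * Bᵀ * S * (L * L⁻¹) := by rw [hLinv, Matrix.mul_one]
      _ = Tᵀ * (Bᵀ * (S * L)) * L⁻¹ := by simp only [Matrix.mul_assoc]
      _ = Tᵀ * ((T * R) * Bᵀ) * L⁻¹ := h1
      _ = (Tᵀ * T) * (R * Bᵀ) * L⁻¹ := by simp only [Matrix.mul_assoc]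
      _ = R * Bᵀ * L⁻¹ := by rw [hTT, Matrix.one_mul]
  -- triangularity of R⁻¹, L⁻¹
  have hRtri : R.BlockTriangular id := fun i j hij => hR i j (by simpa using hij)
  have hLtri : L.BlockTriangular id := fun i j hij => hL i j (by simpa using hij)
  have : Invertible R := R.invertibleOfIsUnitDet (isUnit_iff_ne_zero.mpr hdetR)
  have : Invertible L := L.invertibleOfIsUnitDet (isUnit_iff_ne_zero.mpr hdetL)
  have hRinvtri : (R⁻¹).BlockTriangular id := Matrix.blockTriangular_inv_of_blockTriangular hRtri
  have hLinvtri : (L⁻¹).BlockTriangular id := Matrix.blockTriangular_inv_of_blockTriangular hLtri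
  have htri : (L * B * R⁻¹).BlockTriangular id := (hLtri.mul hBtri).mul hRinvtri
  -- Bᵀ is upper Hessenberg
  have hBthess : ∀ i j : Fin m, j.val + 1 < i.val → Bᵀ i j = 0 := by
    intro i j hij
    exact hbd j i (by omega)
  have hhess : ∀ i j : Fin m, j.val + 1 < i.val → (R * Bᵀ * L⁻¹) i j = 0 := by
    have h1 := hess_aux1 R Bᵀ (fun i j h => hR i j h) hBthess
    exact hess_aux2 (R * Bᵀ) L⁻¹ h1 (fun i j h => hLinvtri (by simpa using h))
  intro i j hij
  push_neg at hij
  rcases lt_trichotomy j.val i.val with h | h | h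
  · rw [hmain]
    exact htri (by simpa using h)
  · exact absurd h hij.1
  · have h' : i.val + 1 < j.val := by omega
    have heq : Sᵀ * B * T = (Tᵀ * Bᵀ * S)ᵀ := by
      rw [Matrix.transpose_mul, Matrix.transpose_mul, Matrix.transpose_transpose,
        Matrix.transpose_transpose, Matrix.mul_assoc]
    have : (Sᵀ * B * T) i j = (R * Bᵀ * L⁻¹) j i := by
      rw [heq, hmain2, Matrix.transpose_apply]
    rw [this]
    exact hhess j i h'
end

section
/- Let m, p, q be integers with 0 ≤ q ≤ p and p + q ≤ m, and let X̂ be an m-by-q complex matrix with orthonormal columns (X̂*X̂ = I_q). Then there exist unitary matrices U₁ ∈ U(p), U₂ ∈ U(m−p), V₁ ∈ U(q) and angles θ₁, …, θ_q ∈ [0, π/2] such that, with C = diag(cos θ₁, …, cos θ_q) and S = diag(sin θ₁, …, sin θ_q), X̂ = diag(U₁, U₂) · Σ̂ · V₁*, where Σ̂ is the m-by-q real matrix whose row-partitioned blocks (of heights q, p−q, q, m−p−q) are [C], [0], [−S], [0]. -/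
open Matrix

/-- The middle factor of the 2-by-1 CS decomposition: an `m × q` real matrix
whose row-partitioned blocks of heights `q, p−q, q, m−p−q` are
`[C], [0], [−S], [0]`. -/
noncomputable def csd21Sigma (m p q : ℕ) (θ : Fin q → ℝ) : Matrix (Fin m) (Fin q) ℝ :=
  fun i j =>
    if hi : i.val < q then
      if j.val = i.val then Real.cos (θ ⟨i.val, hi⟩) else 0
    else if hi2 : i.val < p then 0
    else if hi3 : i.val < p + q then
      if j.val = i.val - p then -Real.sin (θ ⟨i.val - p, by omega⟩) else 0
    else 0

/-- The block diagonal matrix `diag(A, B)` of sizes `k` and `m - k`, viewed as an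
`m × m` matrix (for `k ≤ m`). -/
def blockDiagC (m k : ℕ) (h : k ≤ m) (A : Matrix (Fin k) (Fin k) ℂ)
    (B : Matrix (Fin (m - k)) (Fin (m - k)) ℂ) : Matrix (Fin m) (Fin m) ℂ :=
  Matrix.reindex (finSumFinEquiv.trans (finCongr (Nat.add_sub_cancel' h)))
    (finSumFinEquiv.trans (finCongr (Nat.add_sub_cancel' h)))
    (Matrix.fromBlocks A 0 0 B)


namespace CSDAux

lemma ctm_apply {n q : ℕ} (M : Matrix (Fin n) (Fin q) ℂ) (j k : Fin q) :
    (Mᴴ * M) j k = ∑ i, (starRingEnd ℂ) (M i j) * M i k := by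
  simp [Matrix.mul_apply, Matrix.conjTranspose_apply]

lemma ctm_diag_real {n q : ℕ} (M : Matrix (Fin n) (Fin q) ℂ) (j : Fin q) :
    (Mᴴ * M) j j = ((∑ i, Complex.normSq (M i j) : ℝ) : ℂ) := by
  rw [ctm_apply]
  push_cast
  exact Finset.sum_congr rfl fun i _ => Complex.normSq_eq_conj_mul_self.symm

lemma col_eq_zero {n q : ℕ} {M : Matrix (Fin n) (Fin q) ℂ} {j : Fin q}
    (h : (Mᴴ * M) j j = 0) (i : Fin n) : M i j = 0 := by
  rw [ctm_diag_real] at h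
  have h2 : ∑ i, Complex.normSq (M i j) = 0 := by exact_mod_cast h
  exact Complex.normSq_eq_zero.mp
    ((Finset.sum_eq_zero_iff_of_nonneg fun i _ => Complex.normSq_nonneg _).mp h2 i
      (Finset.mem_univ i))

lemma diag_nonneg_of_eq {n q : ℕ} {M : Matrix (Fin n) (Fin q) ℂ} {j : Fin q} {x : ℝ}
    (h : (Mᴴ * M) j j = (x : ℂ)) : 0 ≤ x := by
  rw [ctm_diag_real] at h
  have h2 : x = ∑ i, Complex.normSq (M i j) := by exact_mod_cast h.symm
  rw [h2]
  exact Finset.sum_nonneg fun i _ => Complex.normSq_nonneg _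

lemma exists_unitary_factor {n q : ℕ} (hqn : q ≤ n)
    (Y : Matrix (Fin n) (Fin q) ℂ) (d : Fin q → ℝ) (hd : ∀ j, 0 ≤ d j)
    (hY : Yᴴ * Y = Matrix.diagonal (fun j => (d j : ℂ))) :
    ∃ U ∈ Matrix.unitaryGroup (Fin n) ℂ,
      ∀ i j, Y i j = U i (Fin.castLE hqn j) * (Real.sqrt (d j) : ℂ) := by
  classical
  set c : Fin q → ℝ := fun j => Real.sqrt (d j) with hc
  set s : Set (Fin n) := {i | ∃ h : i.val < q, d ⟨i.val, h⟩ ≠ 0} with hs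
  set v : Fin n → EuclideanSpace ℂ (Fin n) := fun i =>
    if h : i.val < q then WithLp.toLp 2 (fun r => Y r ⟨i.val, h⟩ / ((c ⟨i.val, h⟩ : ℝ) : ℂ)) else 0 with hv
  have hcsq : ∀ j : Fin q, (c j : ℝ) * c j = d j := fun j => Real.mul_self_sqrt (hd j)
  have hortho : Orthonormal ℂ (s.restrict v) := by
    rw [orthonormal_iff_ite]
    rintro ⟨i, h1, h2⟩ ⟨i', h1', h2'⟩
    set a : Fin q := ⟨i.val, h1⟩ with ha
    set b : Fin q := ⟨i'.val, h1'⟩ with hb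
    have key : (inner ℂ (v i) (v i') : ℂ) = (Yᴴ * Y) a b / (((c a : ℝ) : ℂ) * ((c b : ℝ) : ℂ)) := by
      simp only [hv, dif_pos h1, dif_pos h1']
      rw [ctm_apply, Finset.sum_div]
      rw [PiLp.inner_apply]
      refine Finset.sum_congr rfl fun r _ => ?_
      simp only [RCLike.inner_apply, WithLp.ofLp_toLp]
      rw [map_div₀, Complex.conj_ofReal]
      ring
    have hab : ((⟨i, h1, h2⟩ : s) = (⟨i', h1', h2'⟩ : s)) ↔ a = b := by
      constructor
      · intro h; exact Fin.ext (congrArg (fun x : s => (x : Fin n).val) h)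
      · intro h
        have hval : (a : ℕ) = (b : ℕ) := congrArg Fin.val h
        exact Subtype.ext (Fin.ext hval)
    show inner ℂ (v i) (v i') = _
    rw [key, hY]
    by_cases hab' : a = b
    · rw [if_pos (hab.mpr hab'), hab']
      rw [Matrix.diagonal_apply_eq]
      rw [← Complex.ofReal_mul, hcsq b]
      exact div_self (by exact_mod_cast (hab' ▸ h2 : d b ≠ 0))
    · rw [if_neg (fun h => hab' (hab.mp h))]
      rw [Matrix.diagonal_apply_ne _ hab']
      exact zero_div _
  obtain ⟨bb, hbb⟩ := hortho.exists_orthonormalBasis_extension_of_card_eq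
    (by simp [finrank_euclideanSpace])
  refine ⟨Matrix.of (fun i j => bb j i), ?_, ?_⟩
  · rw [Matrix.mem_unitaryGroup_iff']
    ext j k
    have h1 := orthonormal_iff_ite.mp bb.orthonormal j k
    rw [PiLp.inner_apply] at h1
    simp only [RCLike.inner_apply] at h1
    simp only [Matrix.mul_apply, Matrix.star_apply, Matrix.of_apply, Matrix.one_apply, star, Matrix.conjTranspose_apply]
    rw [← h1]
    exact Finset.sum_congr rfl fun _ _ => mul_comm _ _
  · intro i j
    by_cases hdj : d j = 0
    · have hz : (Yᴴ * Y) j j = 0 := by rw [hY]; simp [hdj]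
      rw [col_eq_zero hz i, hdj]
      simp
    · have hmem : (Fin.castLE hqn j) ∈ s := ⟨j.isLt, by simpa using hdj⟩
      have hb := hbb _ hmem
      have hcj : (c j : ℝ) ≠ 0 := by
        simp only [hc]
        exact Real.sqrt_ne_zero'.mpr (lt_of_le_of_ne (hd j) (Ne.symm hdj))
      have hv' : v (Fin.castLE hqn j) = WithLp.toLp 2 (fun r => Y r j / ((c j : ℝ) : ℂ)) := by
        show (if h : (Fin.castLE hqn j).val < q then _ else _) = _
        rw [dif_pos (show (Fin.castLE hqn j).val < q from j.isLt)]
        rfl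
      rw [hv'] at hb
      have : (Matrix.of (fun i j => bb j i)) i (Fin.castLE hqn j) = Y i j / ((c j : ℝ) : ℂ) := by
        simp only [Matrix.of_apply, hb, WithLp.ofLp_toLp]
      rw [this]
      have hcc : ((Real.sqrt (d j) : ℝ) : ℂ) = ((c j : ℝ) : ℂ) := rfl
      rw [hcc, div_mul_cancel₀ _ (show ((c j : ℝ) : ℂ) ≠ 0 by exact_mod_cast hcj)]

end CSDAux

/-- The 2-by-1 CS decomposition of a matrix with orthonormal columns whose rows
are partitioned into blocks of sizes `p` and `m − p`. -/
theorem csd_two_by_one (m p q : ℕ) (hqp : q ≤ p) (hpqm : p + q ≤ m)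
    (Xhat : Matrix (Fin m) (Fin q) ℂ) (hX : Xhatᴴ * Xhat = 1) :
    ∃ (U₁ : Matrix (Fin p) (Fin p) ℂ) (U₂ : Matrix (Fin (m - p)) (Fin (m - p)) ℂ)
      (V₁ : Matrix (Fin q) (Fin q) ℂ) (θ : Fin q → ℝ),
      U₁ ∈ Matrix.unitaryGroup (Fin p) ℂ ∧
      U₂ ∈ Matrix.unitaryGroup (Fin (m - p)) ℂ ∧
      V₁ ∈ Matrix.unitaryGroup (Fin q) ℂ ∧
      (∀ i, θ i ∈ Set.Icc 0 (Real.pi / 2)) ∧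
      Xhat = blockDiagC m p (by omega) U₁ U₂ *
          (csd21Sigma m p q θ).map Complex.ofReal * V₁ᴴ := by
  classical
  have hpm : p ≤ m := by omega
  set e : Fin p ⊕ Fin (m - p) ≃ Fin m :=
    finSumFinEquiv.trans (finCongr (Nat.add_sub_cancel' hpm)) with he
  have he_left : ∀ k : Fin p, (e (Sum.inl k)).val = k.val := by
    intro k; simp [he, Equiv.trans_apply, finCongr_apply]
  have he_right : ∀ k : Fin (m - p), (e (Sum.inr k)).val = p + k.val := by
    intro k; simp [he, Equiv.trans_apply, finCongr_apply]
  set X' : Matrix (Fin p ⊕ Fin (m - p)) (Fin q) ℂ := Xhat.submatrix e id with hX'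
  set X1 := X'.toRows₁ with hX1
  set X2 := X'.toRows₂ with hX2
  have hXfr : X' = fromRows X1 X2 := (fromRows_toRows X').symm
  have h1 : X'ᴴ * X' = 1 := by
    rw [hX', conjTranspose_submatrix]
    rw [Matrix.submatrix_mul_equiv Xhatᴴ Xhat id e id, hX, Matrix.submatrix_id_id]
  have hsum : X1ᴴ * X1 + X2ᴴ * X2 = 1 := by
    rw [← fromCols_mul_fromRows X1ᴴ X2ᴴ X1 X2,
      ← conjTranspose_fromRows_eq_fromCols_conjTranspose, ← hXfr, h1]
  have hA : (X1ᴴ * X1).IsHermitian := Matrix.isHermitian_conjTranspose_mul_self X1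
  set V : Matrix (Fin q) (Fin q) ℂ := (hA.eigenvectorUnitary : Matrix (Fin q) (Fin q) ℂ)
    with hVdef
  have hVmem : V ∈ Matrix.unitaryGroup (Fin q) ℂ := hA.eigenvectorUnitary.2
  set lam : Fin q → ℝ := hA.eigenvalues with hlam
  have hVV' : Vᴴ * V = 1 := by
    rw [← Matrix.star_eq_conjTranspose]
    exact Matrix.mem_unitaryGroup_iff'.mp hVmem
  have hVV : V * Vᴴ = 1 := by
    rw [← Matrix.star_eq_conjTranspose]
    exact Matrix.mem_unitaryGroup_iff.mp hVmem
  have hdiag : Vᴴ * (X1ᴴ * X1) * V = Matrix.diagonal (fun j => ((lam j : ℝ) : ℂ)) := by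
    have h := hA.conjStarAlgAut_star_eigenvectorUnitary
    rw [Unitary.conjStarAlgAut_star_apply] at h
    rw [Matrix.star_eq_conjTranspose] at h
    rw [hVdef, h]
    rfl
  set Y1 : Matrix (Fin p) (Fin q) ℂ := X1 * V with hY1def
  set Y2 : Matrix (Fin (m - p)) (Fin q) ℂ := X2 * V with hY2def
  have hY1 : Y1ᴴ * Y1 = Matrix.diagonal (fun j => ((lam j : ℝ) : ℂ)) := by
    rw [hY1def, Matrix.conjTranspose_mul, ← hdiag]
    simp only [Matrix.mul_assoc]
  have hY2 : Y2ᴴ * Y2 = Matrix.diagonal (fun j => ((1 - lam j : ℝ) : ℂ)) := by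
    have hX2X2 : X2ᴴ * X2 = 1 - X1ᴴ * X1 := by
      rw [← hsum]; abel
    rw [hY2def, Matrix.conjTranspose_mul]
    calc Vᴴ * X2ᴴ * (X2 * V) = Vᴴ * (X2ᴴ * X2) * V := by simp only [Matrix.mul_assoc]
      _ = Vᴴ * V - Vᴴ * (X1ᴴ * X1) * V := by
          rw [hX2X2, Matrix.mul_sub, Matrix.mul_one, Matrix.sub_mul]
      _ = Matrix.diagonal (fun j => ((1 - lam j : ℝ) : ℂ)) := by
          rw [hVV', hdiag]
          ext i k
          rcases eq_or_ne i k with rfl | hik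
          · simp only [Matrix.sub_apply, Matrix.one_apply_eq, Matrix.diagonal_apply_eq]
            push_cast
            ring
          · simp [Matrix.diagonal_apply_ne _ hik, Matrix.one_apply_ne hik]
  have hlam0 : ∀ j, 0 ≤ lam j := fun j =>
    CSDAux.diag_nonneg_of_eq (by rw [hY1, Matrix.diagonal_apply_eq])
  have hlam1 : ∀ j, lam j ≤ 1 := by
    intro j
    have h2 := CSDAux.diag_nonneg_of_eq (M := Y2) (j := j) (x := 1 - lam j)
      (by rw [hY2, Matrix.diagonal_apply_eq])
    linarith
  obtain ⟨U₁, hU₁mem, hU₁⟩ := CSDAux.exists_unitary_factor hqp Y1 lam hlam0 hY1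
  have hqmp : q ≤ m - p := by omega
  obtain ⟨U₂, hU₂mem, hU₂⟩ := CSDAux.exists_unitary_factor hqmp (-Y2)
    (fun j => 1 - lam j) (fun j => by have := hlam1 j; show (0:ℝ) ≤ 1 - lam j; linarith)
    (by rw [Matrix.conjTranspose_neg, Matrix.neg_mul, Matrix.mul_neg, neg_neg, hY2])
  have hU₂' : ∀ (i : Fin (m - p)) (j : Fin q), (-Y2) i j =
      U₂ i (Fin.castLE hqmp j) * ((Real.sqrt (1 - lam j) : ℝ) : ℂ) := fun i j => hU₂ i j
  set θ : Fin q → ℝ := fun j => Real.arcsin (Real.sqrt (1 - lam j)) with hθ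
  have hsqrt_le : ∀ j, Real.sqrt (1 - lam j) ≤ 1 := fun j =>
    Real.sqrt_le_one.mpr (by have := hlam0 j; linarith)
  have hsin : ∀ j, Real.sin (θ j) = Real.sqrt (1 - lam j) := fun j =>
    Real.sin_arcsin (le_trans (by norm_num) (Real.sqrt_nonneg _)) (hsqrt_le j)
  have hcos : ∀ j, Real.cos (θ j) = Real.sqrt (lam j) := by
    intro j
    rw [hθ]
    rw [Real.cos_arcsin, Real.sq_sqrt (by have := hlam1 j; linarith)]
    congr 1
    ring
  refine ⟨U₁, U₂, V, θ, hU₁mem, hU₂mem, hVmem, ?_, ?_⟩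
  · intro j
    exact ⟨Real.arcsin_nonneg.mpr (Real.sqrt_nonneg _), Real.arcsin_le_pi_div_two _⟩
  set Sc : Matrix (Fin m) (Fin q) ℂ := (csd21Sigma m p q θ).map Complex.ofReal with hSc
  set Sp : Matrix (Fin p ⊕ Fin (m - p)) (Fin q) ℂ := Sc.submatrix e id with hSp
  set St := Sp.toRows₁ with hSt
  set Sb := Sp.toRows₂ with hSb
  have htop : Y1 = U₁ * St := by
    ext i j
    rw [hU₁ i j, Matrix.mul_apply]
    rw [Finset.sum_eq_single (Fin.castLE hqp j)]
    · have hval : (e (Sum.inl (Fin.castLE hqp j))).val = j.val := he_left _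
      have hStv : St (Fin.castLE hqp j) j = ((Real.cos (θ j) : ℝ) : ℂ) := by
        rw [hSt, hSp, hSc]
        simp only [Matrix.toRows₁_apply, Matrix.submatrix_apply, Matrix.map_apply, id_eq]
        simp only [csd21Sigma]
        rw [dif_pos (by omega : (e (Sum.inl (Fin.castLE hqp j))).val < q)]
        rw [if_pos hval.symm]
        congr 2 <;> exact Fin.ext (by omega)
      rw [hStv, hcos]
    · intro k _ hk
      have hkv : k.val ≠ j.val := fun h => hk (Fin.ext h)
      have hev : (e (Sum.inl k)).val = k.val := he_left _
      have hStv : St k j = 0 := by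
        rw [hSt, hSp, hSc]
        simp only [Matrix.toRows₁_apply, Matrix.submatrix_apply, Matrix.map_apply, id_eq]
        simp only [csd21Sigma]
        by_cases hkq : (e (Sum.inl k)).val < q
        · rw [dif_pos hkq, if_neg (by omega)]
          norm_num
        · rw [dif_neg hkq, dif_pos (by omega : (e (Sum.inl k)).val < p)]
          norm_num
      rw [hStv, mul_zero]
    · intro h
      exact absurd (Finset.mem_univ _) h
  have hbot : Y2 = U₂ * Sb := by
    ext i j
    have hneg : Y2 i j = -((-Y2) i j) := by simp
    rw [hneg, hU₂' i j, Matrix.mul_apply]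
    rw [Finset.sum_eq_single (Fin.castLE hqmp j)]
    · have hval : (e (Sum.inr (Fin.castLE hqmp j))).val = p + j.val := he_right _
      have hSbv : Sb (Fin.castLE hqmp j) j = -((Real.sin (θ j) : ℝ) : ℂ) := by
        rw [hSb, hSp, hSc]
        simp only [Matrix.toRows₂_apply, Matrix.submatrix_apply, Matrix.map_apply, id_eq]
        simp only [csd21Sigma]
        rw [dif_neg (by omega), dif_neg (by omega),
          dif_pos (by omega : (e (Sum.inr (Fin.castLE hqmp j))).val < p + q)]
        rw [if_pos (by omega : (j : ℕ) = (e (Sum.inr (Fin.castLE hqmp j))).val - p)]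
        have hidx : (⟨(e (Sum.inr (Fin.castLE hqmp j))).val - p, by omega⟩ : Fin q) = j :=
          Fin.ext (show (e (Sum.inr (Fin.castLE hqmp j))).val - p = (j : ℕ) by omega)
        rw [hidx]
        push_cast
        ring
      rw [hSbv, hsin]
      push_cast
      ring
    · intro k _ hk
      have hkv : k.val ≠ j.val := fun h => hk (Fin.ext h)
      have hev : (e (Sum.inr k)).val = p + k.val := he_right _
      have hSbv : Sb k j = 0 := by
        rw [hSb, hSp, hSc]
        simp only [Matrix.toRows₂_apply, Matrix.submatrix_apply, Matrix.map_apply, id_eq]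
        simp only [csd21Sigma]
        by_cases hkq : (e (Sum.inr k)).val < p + q
        · rw [dif_neg (by omega), dif_neg (by omega), dif_pos hkq, if_neg (by omega)]
          norm_num
        · rw [dif_neg (by omega), dif_neg (by omega), dif_neg hkq]
          norm_num
      rw [hSbv, mul_zero]
    · intro h
      exact absurd (Finset.mem_univ _) h
  have hX1eq : X1 = U₁ * St * Vᴴ := by
    calc X1 = X1 * (V * Vᴴ) := by rw [hVV, Matrix.mul_one]
      _ = Y1 * Vᴴ := by rw [hY1def]; simp only [Matrix.mul_assoc]
      _ = U₁ * St * Vᴴ := by rw [htop]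
  have hX2eq : X2 = U₂ * Sb * Vᴴ := by
    calc X2 = X2 * (V * Vᴴ) := by rw [hVV, Matrix.mul_one]
      _ = Y2 * Vᴴ := by rw [hY2def]; simp only [Matrix.mul_assoc]
      _ = U₂ * Sb * Vᴴ := by rw [hbot]
  have hBD : blockDiagC m p (by omega) U₁ U₂ =
      (fromBlocks U₁ 0 0 U₂).submatrix e.symm e.symm := by
    rfl
  have hfinal : fromBlocks U₁ 0 0 U₂ * Sp = fromRows (U₁ * St) (U₂ * Sb) := by
    conv_lhs => rw [← fromRows_toRows Sp]
    rw [fromBlocks_mul_fromRows]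
    rw [Matrix.zero_mul, Matrix.zero_mul, add_zero, zero_add]
  have hsub_mul : ∀ (A : Matrix (Fin p ⊕ Fin (m - p)) (Fin q) ℂ)
      (B : Matrix (Fin q) (Fin q) ℂ),
      A.submatrix e.symm id * B = (A * B).submatrix e.symm id := by
    intro A B
    ext i j
    simp [Matrix.mul_apply, Matrix.submatrix_apply]
  have hScsub : Sc = Sp.submatrix e.symm id := by
    rw [hSp]
    ext i j
    simp [Matrix.submatrix_apply]
  have hXsub : Xhat = X'.submatrix e.symm id := by
    rw [hX']
    ext i j
    simp [Matrix.submatrix_apply]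
  rw [hBD, hScsub, Matrix.submatrix_mul_equiv (fromBlocks U₁ 0 0 U₂) Sp e.symm e.symm id,
    hfinal, hsub_mul]
  rw [fromRows_mul, ← hX1eq, ← hX2eq, ← hXfr]
  exact hXsub
end
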